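/- Let K_P : ℝ → ℝ be even, 2π-periodic, continuous on 𝕋∖{0}, integrable, and strictly decreasing on (0,π). If f, g ∈ L^∞(𝕋) are odd functions with f(y) ≥ g(y) for all y ∈ [0,π], then either Lf(x) > Lg(x) for all x ∈ (0,π), or f = g almost everywhere on 𝕋, where Lh(x) = ∫_{−π}^{π} K_P(x−y) h(y) dy. -/

import Mathlib

open MeasureTheory Real
open scoped ENNReal

/-- Strict monotonicity of the periodic convolution operator on ordered odd functions. -/
theorem conv_strict_monotone_odd
    (KP f g : ℝ → ℝ)
    (hKeven : ∀ x, KP (-x) = KP x)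
    (hKper : Function.Periodic KP (2 * π))
    (hKcont : ContinuousOn KP {x : ℝ | x ≠ 0})
    (hKint : IntegrableOn KP (Set.Icc (-π) π))
    (hKdec : StrictAntiOn KP (Set.Ioo 0 π))
    (hfm : Measurable f) (hgm : Measurable g)
    (hfbdd : ∃ C : ℝ, ∀ x, |f x| ≤ C) (hgbdd : ∃ C : ℝ, ∀ x, |g x| ≤ C)
    (hfodd : ∀ y, f (-y) = -f y) (hgodd : ∀ y, g (-y) = -g y)
    (hfg : ∀ y ∈ Set.Icc 0 π, g y ≤ f y) :
    (∀ x ∈ Set.Ioo 0 π,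
        (∫ y in Set.Icc (-π) π, KP (x - y) * g y)
          < ∫ y in Set.Icc (-π) π, KP (x - y) * f y) ∨
    (∀ᵐ y ∂(volume.restrict (Set.Icc (-π) π)), f y = g y) := by
  have hπ : (0:ℝ) < π := pi_pos
  by_cases hae : ∀ᵐ y ∂(volume.restrict (Set.Icc (-π) π)), f y = g y
  · exact Or.inr hae
  left
  -- Kernel value at π is strictly below all values on (0,π)
  have hKpi : ∀ t ∈ Set.Ioo (0:ℝ) π, KP π < KP t := by
    intro t ht
    set t' : ℝ := (t + π) / 2 with ht'def
    have ht'mem : t' ∈ Set.Ioo (0:ℝ) π := ⟨by simp only [ht'def]; linarith [ht.1], by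
      simp only [ht'def]; linarith [ht.2]⟩
    have htt' : t < t' := by simp only [ht'def]; linarith [ht.2]
    have hcontπ : ContinuousAt KP π :=
      hKcont.continuousAt (IsOpen.mem_nhds isOpen_ne (ne_of_gt hπ))
    have htend : Filter.Tendsto KP (nhdsWithin π (Set.Iio π)) (nhds (KP π)) :=
      hcontπ.continuousWithinAt.tendsto
    have hev : ∀ᶠ s in nhdsWithin π (Set.Iio π), KP s ≤ KP t' := by
      filter_upwards [Ioo_mem_nhdsLT_of_mem (Set.mem_Ioc.mpr ⟨ht'mem.2, le_refl π⟩)]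
        with s hs
      exact (hKdec ht'mem ⟨lt_trans ht'mem.1 hs.1, hs.2⟩ hs.1).le
    have : KP π ≤ KP t' := le_of_tendsto htend hev
    exact lt_of_le_of_lt this (hKdec ht ht'mem htt')
  -- Key comparison: KP (x+y) < KP (x-y) for x,y in (0,π), x ≠ y
  have hkey : ∀ x ∈ Set.Ioo (0:ℝ) π, ∀ y ∈ Set.Ioo (0:ℝ) π, y ≠ x →
      KP (x + y) < KP (x - y) := by
    rintro x ⟨hx0, hxπ⟩ y ⟨hy0, hyπ⟩ hne
    have habs : |x - y| ∈ Set.Ioo (0:ℝ) π := by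
      constructor
      · exact abs_pos.mpr (sub_ne_zero.mpr (fun h => hne h.symm))
      · rcases abs_cases (x - y) with ⟨h, _⟩ | ⟨h, _⟩ <;> rw [h] <;> linarith
    have hKd : KP (x - y) = KP |x - y| := by
      rcases abs_cases (x - y) with ⟨h, _⟩ | ⟨h, _⟩
      · rw [h]
      · rw [h, ← hKeven (x - y)]
    rw [hKd]
    rcases lt_trichotomy (x + y) π with hlt | heq | hgt
    · refine hKdec habs ⟨by linarith, hlt⟩ ?_
      rcases abs_cases (x - y) with ⟨h, _⟩ | ⟨h, _⟩ <;> rw [h] <;> linarith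
    · rw [heq]; exact hKpi _ habs
    · have h2 : KP (x + y) = KP (2 * π - (x + y)) := by
        have e1 : KP (2 * π - (x + y)) = KP (-(x + y - 2 * π)) := by ring_nf
        have e2 : KP (-(x + y - 2 * π)) = KP (x + y - 2 * π) := hKeven _
        have e3 : KP (x + y - 2 * π) = KP (x + y) := hKper.sub_eq _
        rw [e1, e2, e3]
      rw [h2]
      refine hKdec habs ⟨by linarith, by linarith⟩ ?_
      rcases abs_cases (x - y) with ⟨h, _⟩ | ⟨h, _⟩ <;> rw [h] <;> linarith
  -- Integrability of KP on a long interval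
  have hKbase : IntervalIntegrable KP volume (-π) π := by
    rw [intervalIntegrable_iff']
    rwa [Set.uIcc_of_le (by linarith)]
  have hKright : IntervalIntegrable KP volume π (3 * π) := by
    have h := hKbase.comp_add_right (-(2 * π))
    have hfun : (fun x => KP (x + -(2 * π))) = KP := by
      funext z
      rw [show z + -(2 * π) = z - 2 * π by ring, hKper.sub_eq]
    rw [hfun, show -π - -(2 * π) = π by ring, show π - -(2 * π) = 3 * π by ring] at h
    exact h
  have hK3 : IntervalIntegrable KP volume (-π) (3 * π) := hKbase.trans hKright
  -- the difference function
  set D : ℝ → ℝ := fun y => f y - g y with hD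
  have hDm : Measurable D := hfm.sub hgm
  have hDodd : ∀ y, D (-y) = -D y := by
    intro y; simp only [hD, hfodd, hgodd]; ring
  have hDpos : ∀ y ∈ Set.Icc (0:ℝ) π, 0 ≤ D y := fun y hy => sub_nonneg.mpr (hfg y hy)
  -- the positive-measure set
  set S : Set ℝ := Set.Ioo 0 π ∩ {y | g y < f y} with hSdef
  have hSmeas : MeasurableSet S := measurableSet_Ioo.inter (measurableSet_lt hgm hfm)
  have hSpos : 0 < volume S := by
    by_contra hc
    push_neg at hc
    have hS0 : volume S = 0 := le_antisymm hc (by simp)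
    apply hae
    rw [ae_restrict_iff' measurableSet_Icc]
    rw [Filter.eventually_iff, mem_ae_iff]
    have hsub : {y : ℝ | y ∈ Set.Icc (-π) π → f y = g y}ᶜ ⊆
        ({-π, 0, π} : Set ℝ) ∪ S ∪ (Neg.neg ⁻¹' S) := by
      intro y hy
      simp only [Set.mem_compl_iff, Set.mem_setOf_eq, not_forall] at hy
      obtain ⟨hyI, hyne⟩ := hy
      rcases lt_trichotomy y 0 with hy0 | hy0 | hy0
      · rcases eq_or_lt_of_le hyI.1 with h | h
        · exact Or.inl (Or.inl (by simp [← h]))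
        · refine Or.inr ?_
          have hny : -y ∈ Set.Ioo (0:ℝ) π := ⟨by linarith, by linarith [hyI.1]⟩
          have : g (-y) < f (-y) := by
            rcases lt_or_eq_of_le (hfg (-y) ⟨hny.1.le, hny.2.le⟩) with h' | h'
            · exact h'
            · exfalso; apply hyne
              have := congrArg Neg.neg h'
              simpa [hfodd, hgodd] using this.symm
          exact ⟨hny, this⟩
      · exact Or.inl (Or.inl (by simp [hy0]))
      · rcases eq_or_lt_of_le hyI.2 with h | h
        · exact Or.inl (Or.inl (by simp [h]))
        · refine Or.inl (Or.inr ?_)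
          have hym : y ∈ Set.Ioo (0:ℝ) π := ⟨hy0, h⟩
          rcases lt_or_eq_of_le (hfg y ⟨hy0.le, h.le⟩) with h' | h'
          · exact ⟨hym, h'⟩
          · exact absurd h'.symm hyne
    refine measure_mono_null hsub ?_
    have hnegS : volume (Neg.neg ⁻¹' S) = 0 := by
      rw [(Measure.measurePreserving_neg (volume : Measure ℝ)).measure_preimage
        hSmeas.nullMeasurableSet]
      exact hS0
    refine measure_union_null (measure_union_null ?_ hS0) hnegS
    refine measure_union_null ?_ (measure_union_null (measure_singleton _) (measure_singleton _))
    exact measure_singleton _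
  -- main argument for each x
  intro x hx
  -- integrability of translated kernels
  have hKsub : IntervalIntegrable (fun y => KP (x - y)) volume (-π) π := by
    have h1 : IntervalIntegrable KP volume (x - π) (x + π) := by
      refine hK3.mono_set ?_
      rw [Set.uIcc_of_le (by linarith), Set.uIcc_of_le (by linarith [hx.1, hx.2])]
      exact Set.Icc_subset_Icc (by linarith [hx.1]) (by linarith [hx.2])
    have h2 := h1.comp_sub_left x
    rw [show x - (x - π) = π by ring, show x - (x + π) = -π by ring] at h2
    exact h2.symm
  have hKadd : IntervalIntegrable (fun y => KP (x + y)) volume 0 π := by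
    have h1 : IntervalIntegrable KP volume x (x + π) := by
      refine hK3.mono_set ?_
      rw [Set.uIcc_of_le (by linarith), Set.uIcc_of_le (by linarith [hx.1, hx.2])]
      exact Set.Icc_subset_Icc (by linarith [hx.1]) (by linarith [hx.2])
    have h2 := h1.comp_add_left x
    rw [show x - x = (0:ℝ) by ring, show x + π - x = π by ring] at h2
    exact h2
  -- product integrability
  have hprod : ∀ φ : ℝ → ℝ, Measurable φ → (∃ C : ℝ, ∀ z, |φ z| ≤ C) →
      ∀ a b : ℝ, IntervalIntegrable (fun y => KP (x - y)) volume a b →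
      IntervalIntegrable (fun y => KP (x - y) * φ y) volume a b := by
    intro φ hφm hφb a b hk
    rw [intervalIntegrable_iff] at hk ⊢
    have := hk.bdd_mul (hφm.aestronglyMeasurable.restrict) (c := hφb.choose) (Filter.Eventually.of_forall (by simpa [Real.norm_eq_abs] using hφb.choose_spec))
    refine this.congr ?_
    exact Filter.Eventually.of_forall fun y => mul_comm _ _
  have hprod' : ∀ φ : ℝ → ℝ, Measurable φ → (∃ C : ℝ, ∀ z, |φ z| ≤ C) →
      ∀ a b : ℝ, IntervalIntegrable (fun y => KP (x + y)) volume a b →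
      IntervalIntegrable (fun y => KP (x + y) * φ y) volume a b := by
    intro φ hφm hφb a b hk
    rw [intervalIntegrable_iff] at hk ⊢
    have := hk.bdd_mul (hφm.aestronglyMeasurable.restrict) (c := hφb.choose) (Filter.Eventually.of_forall (by simpa [Real.norm_eq_abs] using hφb.choose_spec))
    refine this.congr ?_
    exact Filter.Eventually.of_forall fun y => mul_comm _ _
  have hDbdd : ∃ C : ℝ, ∀ z, |D z| ≤ C := by
    obtain ⟨C1, hC1⟩ := hfbdd; obtain ⟨C2, hC2⟩ := hgbdd
    exact ⟨C1 + C2, fun z => (abs_sub _ _).trans (add_le_add (hC1 z) (hC2 z))⟩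
  have hIf : IntervalIntegrable (fun y => KP (x - y) * f y) volume (-π) π :=
    hprod f hfm hfbdd _ _ hKsub
  have hIg : IntervalIntegrable (fun y => KP (x - y) * g y) volume (-π) π :=
    hprod g hgm hgbdd _ _ hKsub
  have hID : IntervalIntegrable (fun y => KP (x - y) * D y) volume (-π) π :=
    hprod D hDm hDbdd _ _ hKsub
  have hID2 : IntervalIntegrable (fun y => KP (x + y) * D y) volume 0 π :=
    hprod' D hDm hDbdd _ _ hKadd
  -- reduce to positivity of the D-integral
  have hicc : ∀ φ : ℝ → ℝ, (∫ y in Set.Icc (-π) π, φ y) = ∫ y in (-π)..π, φ y := by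
    intro φ
    rw [intervalIntegral.integral_of_le (by linarith), integral_Icc_eq_integral_Ioc]
  rw [hicc, hicc]
  have hsplit : (∫ y in (-π)..π, KP (x - y) * f y) - ∫ y in (-π)..π, KP (x - y) * g y
      = ∫ y in (-π)..π, KP (x - y) * D y := by
    rw [← intervalIntegral.integral_sub hIf hIg]
    congr 1; funext y; simp only [hD]; ring
  rw [← sub_pos, hsplit]
  -- symmetrize
  have hKsubmono : ∀ a b : ℝ, -π ≤ a → a ≤ b → b ≤ π →
      IntervalIntegrable (fun y => KP (x - y)) volume a b := by
    intro a b h1 h2 h3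
    refine hKsub.mono_set ?_
    rw [Set.uIcc_of_le h2, Set.uIcc_of_le (by linarith)]
    exact Set.Icc_subset_Icc h1 h3
  have hIDL : IntervalIntegrable (fun y => KP (x - y) * D y) volume (-π) 0 :=
    hprod D hDm hDbdd _ _ (hKsubmono (-π) 0 le_rfl (by linarith) hπ.le)
  have hIDR : IntervalIntegrable (fun y => KP (x - y) * D y) volume 0 π :=
    hprod D hDm hDbdd _ _ (hKsubmono 0 π (by linarith) hπ.le le_rfl)
  have hsym : (∫ y in (-π)..π, KP (x - y) * D y)
      = ∫ y in (0:ℝ)..π, (KP (x - y) - KP (x + y)) * D y := by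
    have hadj : (∫ y in (-π)..(0:ℝ), KP (x - y) * D y) + ∫ y in (0:ℝ)..π, KP (x - y) * D y
        = ∫ y in (-π)..π, KP (x - y) * D y :=
      intervalIntegral.integral_add_adjacent_intervals hIDL hIDR
    have hneg : (∫ y in (-π)..(0:ℝ), KP (x - y) * D y)
        = ∫ y in (0:ℝ)..π, -(KP (x + y) * D y) := by
      have := intervalIntegral.integral_comp_neg (a := (0:ℝ)) (b := π)
        (fun y => KP (x - y) * D y)
      rw [neg_zero] at this
      rw [← this]
      congr 1; funext y
      rw [show x - -y = x + y by ring, hDodd]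
      ring
    have hID2n : IntervalIntegrable (fun y => -(KP (x + y) * D y)) volume 0 π := by
      exact hID2.neg
    rw [← hadj, hneg, ← intervalIntegral.integral_add hID2n hIDR]
    congr 1; funext y; ring
  rw [hsym]
  -- positivity
  set G : ℝ → ℝ := fun y => (KP (x - y) - KP (x + y)) * D y with hGdef
  have hGint : IntegrableOn G (Set.Ioc 0 π) volume := by
    have h1 : IntervalIntegrable G volume 0 π := by
      have := hIDR.sub hID2
      refine this.congr ?_
      exact fun y _ => by show _ = (KP (x - y) - KP (x + y)) * D y; ring
    rwa [intervalIntegrable_iff_integrableOn_Ioc_of_le hπ.le] at h1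
  have hGnn : 0 ≤ᵐ[volume.restrict (Set.Ioc 0 π)] G := by
    have hxne : ∀ᵐ y ∂(volume.restrict (Set.Ioc 0 π)), y ≠ x := by
      refine Filter.Eventually.filter_mono (ae_mono Measure.restrict_le_self) ?_
      rw [Filter.eventually_iff, mem_ae_iff]
      have : {y : ℝ | y ≠ x}ᶜ = {x} := by ext z; simp
      rw [this]; exact measure_singleton _
    filter_upwards [hxne, ae_restrict_mem measurableSet_Ioc] with y hy hymem
    rcases eq_or_lt_of_le hymem.2 with hyπ | hyπ
    · have : KP (x - y) = KP (x + y) := by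
        rw [hyπ]
        have := hKper (x - π)
        rw [show x - π + 2 * π = x + π by ring] at this
        exact this.symm
      simp [hGdef, this]
    · have h1 : KP (x + y) < KP (x - y) := hkey x hx y ⟨hymem.1, hyπ⟩ hy
      exact mul_nonneg (sub_nonneg.mpr h1.le) (hDpos y ⟨hymem.1.le, hymem.2⟩)
  rw [intervalIntegral.integral_of_le hπ.le]
  rw [setIntegral_pos_iff_support_of_nonneg_ae hGnn hGint]
  have hsub2 : S \ {x} ⊆ Function.support G ∩ Set.Ioc 0 π := by
    rintro y ⟨⟨hyI, hylt⟩, hyx⟩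
    refine ⟨?_, ⟨hyI.1, hyI.2.le⟩⟩
    have h1 : KP (x + y) < KP (x - y) := hkey x hx y hyI (by simpa using hyx)
    have h2 : 0 < D y := sub_pos.mpr hylt
    simp only [Function.mem_support, hGdef]
    exact ne_of_gt (mul_pos (sub_pos.mpr h1) h2)
  calc (0:ℝ≥0∞) < volume (S \ {x}) := by
        rwa [measure_diff_null (measure_singleton x)]
    _ ≤ volume (Function.support G ∩ Set.Ioc 0 π) := measure_mono hsub2
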